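/- arXiv:0904.0406 — 2 statements merged into one kernel-verified Lean document; each statement's English description precedes it below -/
import Mathlib

section
/- The series ∑_{n=0}^∞ (1/4)^n · ((1/2)_n)^3/((1)_n)^3 · (6n+1) converges to 4/π. -/
open Filter Real

noncomputable def poch (x : ℝ) : ℕ → ℝ
  | 0 => 1
  | n + 1 => poch x n * (x + n)

noncomputable def pochR (x k : ℝ) : ℝ := Real.Gamma (x + k) / Real.Gamma x

open Topology

namespace Rama


lemma poch_succ (x : ℝ) (n : ℕ) : poch x (n+1) = poch x n * (x + n) := rfl

lemma poch_pos {x : ℝ} (hx : 0 < x) (n : ℕ) : 0 < poch x n := by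
  induction n with
  | zero => simp [poch]
  | succ n ih => rw [poch_succ]; exact mul_pos ih (by positivity)

lemma poch_half_le_one (n : ℕ) : poch (1/2) n ≤ poch 1 n := by
  induction n with
  | zero => simp [poch]
  | succ n ih =>
    rw [poch_succ, poch_succ]
    have h1 : (0:ℝ) < poch (1/2) n := poch_pos (by norm_num) n
    nlinarith [Nat.cast_nonneg (α := ℝ) n]

lemma poch_one_le_add (n k : ℕ) : poch 1 n ≤ poch 1 (n + k) := by
  induction k with
  | zero => simp
  | succ k ih =>
    rw [show n + (k+1) = (n+k)+1 from rfl, poch_succ]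
    nlinarith [poch_pos (x := (1:ℝ)) one_pos (n+k), Nat.cast_nonneg (α := ℝ) (n+k)]

lemma poch_one_lower (k n : ℕ) :
    poch 1 k * ((k:ℝ)+1) * poch 1 (n+1) ≤ poch 1 ((n+1)+k) := by
  induction n with
  | zero =>
    have h : (1:ℕ) + k = k + 1 := by omega
    rw [h, poch_succ]
    simp [poch]
    ring_nf
    nlinarith [poch_pos (x := (1:ℝ)) one_pos k]
  | succ n ih =>
    have h : (n+2) + k = ((n+1)+k) + 1 := by omega
    rw [h, poch_succ 1 ((n+1)+k)]
    have h2 : poch 1 (n+1+1) = poch 1 (n+1) * (1 + ((n:ℝ)+1)) := by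
      rw [poch_succ]; push_cast; ring
    rw [show n + 2 = n + 1 + 1 from rfl, h2]
    have hcast : ((1:ℝ) + ((n:ℝ)+1)) ≤ 1 + (((n+1)+k : ℕ) : ℝ) := by
      push_cast; linarith [Nat.cast_nonneg (α := ℝ) k]
    have hp : (0:ℝ) < poch 1 ((n+1)+k) := poch_pos one_pos _
    calc poch 1 k * ((k:ℝ)+1) * (poch 1 (n+1) * (1 + ((n:ℝ)+1)))
        = (poch 1 k * ((k:ℝ)+1) * poch 1 (n+1)) * (1 + ((n:ℝ)+1)) := by ring
      _ ≤ poch 1 ((n+1)+k) * (1 + (((n+1)+k : ℕ) : ℝ)) := by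
          apply mul_le_mul ih hcast (by positivity) (le_of_lt hp)

noncomputable def bb (k n : ℕ) : ℝ :=
  (poch (1/2) n)^3 * (poch (1/2) k)^2 / (poch 1 n * (poch 1 (n+k))^2 * 4^n)

noncomputable def FF (k n : ℕ) : ℝ := (6*(n:ℝ) + 4*(k:ℝ) + 1) * bb k n

lemma bb_pos (k n : ℕ) : 0 < bb k n := by
  unfold bb
  have hp : (0:ℝ) < poch (1/2) n := poch_pos (by norm_num) n
  have hq : (0:ℝ) < poch (1/2) k := poch_pos (by norm_num) k
  have hr : (0:ℝ) < poch 1 n := poch_pos one_pos n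
  have hs : (0:ℝ) < poch 1 (n+k) := poch_pos one_pos (n+k)
  positivity

lemma FF_nonneg (k n : ℕ) : 0 ≤ FF k n := by
  unfold FF
  have := bb_pos k n
  positivity

lemma key (k n : ℕ) :
    FF (k+1) n - FF k n = 8*((n:ℝ)+1) * bb k (n+1) - 8*(n:ℝ) * bb k n := by
  have hp : (0:ℝ) < poch (1/2) n := poch_pos (by norm_num) n
  have hq : (0:ℝ) < poch (1/2) k := poch_pos (by norm_num) k
  have hr : (0:ℝ) < poch 1 n := poch_pos one_pos n
  have hs : (0:ℝ) < poch 1 (n+k) := poch_pos one_pos (n+k)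
  have h4 : (0:ℝ) < (4:ℝ)^n := by positivity
  unfold FF bb
  rw [show n + (k+1) = (n+k) + 1 from rfl]
  rw [show (n+1) + k = (n+k) + 1 from by omega]
  rw [poch_succ (1/2) k, poch_succ 1 (n+k), poch_succ (1/2) n, poch_succ 1 n,
    pow_succ (4:ℝ) n]
  push_cast
  field_simp
  ring

lemma bb_le (k n : ℕ) : bb k n ≤ (poch (1/2) k)^2 * (1/4)^n := by
  unfold bb
  have hp : (0:ℝ) < poch (1/2) n := poch_pos (by norm_num) n
  have hq : (0:ℝ) < poch (1/2) k := poch_pos (by norm_num) k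
  have hr : (0:ℝ) < poch 1 n := poch_pos one_pos n
  have hs : (0:ℝ) < poch 1 (n+k) := poch_pos one_pos (n+k)
  have hpr : poch (1/2) n ≤ poch 1 n := poch_half_le_one n
  have hps : poch (1/2) n ≤ poch 1 (n+k) :=
    le_trans (poch_half_le_one n) (poch_one_le_add n k)
  have h3 : (poch (1/2) n)^3 ≤ poch 1 n * (poch 1 (n+k))^2 := by
    have h2 : poch (1/2) n * poch (1/2) n ≤ poch 1 (n+k) * poch 1 (n+k) :=
      mul_le_mul hps hps hp.le hs.le
    calc (poch (1/2) n)^3 = poch (1/2) n * (poch (1/2) n * poch (1/2) n) := by ring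
      _ ≤ poch 1 n * (poch 1 (n+k) * poch 1 (n+k)) :=
          mul_le_mul hpr h2 (by positivity) hr.le
      _ = poch 1 n * (poch 1 (n+k))^2 := by ring
  rw [div_le_iff₀ (by positivity)]
  have h44 : ((1:ℝ)/4)^n * 4^n = 1 := by
    rw [← mul_pow]; norm_num
  have h5 : (poch (1/2) k)^2 * (1/4)^n * (poch 1 n * (poch 1 (n+k))^2 * 4^n)
      = poch 1 n * (poch 1 (n+k))^2 * (poch (1/2) k)^2 := by
    calc (poch (1/2) k)^2 * (1/4)^n * (poch 1 n * (poch 1 (n+k))^2 * 4^n)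
        = poch 1 n * (poch 1 (n+k))^2 * (poch (1/2) k)^2 * ((1/4:ℝ)^n * 4^n) := by ring
      _ = poch 1 n * (poch 1 (n+k))^2 * (poch (1/2) k)^2 := by rw [h44, mul_one]
  have h6 := mul_le_mul_of_nonneg_right h3 (sq_nonneg (poch (1/2) k))
  rw [h5]
  linarith

lemma bb_succ_le (k n : ℕ) : ((k:ℝ)+1)^2 * bb k (n+1) ≤ (1/4)^(n+1) := by
  unfold bb
  have hp : (0:ℝ) < poch (1/2) (n+1) := poch_pos (by norm_num) (n+1)
  have hq : (0:ℝ) < poch (1/2) k := poch_pos (by norm_num) k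
  have hr : (0:ℝ) < poch 1 (n+1) := poch_pos one_pos (n+1)
  have hs0 : (0:ℝ) < poch 1 k := poch_pos one_pos k
  have hs : (0:ℝ) < poch 1 ((n+1)+k) := poch_pos one_pos ((n+1)+k)
  have hpr : poch (1/2) (n+1) ≤ poch 1 (n+1) := poch_half_le_one (n+1)
  have hqs : poch (1/2) k ≤ poch 1 k := poch_half_le_one k
  have hlow : poch 1 k * ((k:ℝ)+1) * poch 1 (n+1) ≤ poch 1 ((n+1)+k) :=
    poch_one_lower k n
  rw [mul_div_assoc', div_le_iff₀ (by positivity)]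
  have h44 : ((1:ℝ)/4)^(n+1) * 4^(n+1) = 1 := by
    rw [← mul_pow]; norm_num
  have h5 : ((1:ℝ)/4)^(n+1) * (poch 1 (n+1) * (poch 1 ((n+1)+k))^2 * 4^(n+1))
      = poch 1 (n+1) * (poch 1 ((n+1)+k))^2 := by
    calc ((1:ℝ)/4)^(n+1) * (poch 1 (n+1) * (poch 1 ((n+1)+k))^2 * 4^(n+1))
        = poch 1 (n+1) * (poch 1 ((n+1)+k))^2 * (((1:ℝ)/4)^(n+1) * 4^(n+1)) := by ring
      _ = _ := by rw [h44, mul_one]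
  rw [h5]
  -- goal : (k+1)^2 * (p^3 * q^2) ≤ r * s^2
  have hA : (poch (1/2) (n+1))^3 ≤ (poch 1 (n+1))^3 :=
    pow_le_pow_left₀ hp.le hpr 3
  have hB : (poch (1/2) k)^2 ≤ (poch 1 k)^2 := pow_le_pow_left₀ hq.le hqs 2
  have hC : (poch 1 k * ((k:ℝ)+1) * poch 1 (n+1))^2 ≤ (poch 1 ((n+1)+k))^2 :=
    pow_le_pow_left₀ (by positivity) hlow 2
  have hmain : ((k:ℝ)+1)^2 * ((poch (1/2) (n+1))^3 * (poch (1/2) k)^2)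
      ≤ poch 1 (n+1) * (poch 1 ((n+1)+k))^2 := by
    calc ((k:ℝ)+1)^2 * ((poch (1/2) (n+1))^3 * (poch (1/2) k)^2)
        ≤ ((k:ℝ)+1)^2 * ((poch 1 (n+1))^3 * (poch 1 k)^2) := by
          apply mul_le_mul_of_nonneg_left _ (by positivity)
          exact mul_le_mul hA hB (by positivity) (by positivity)
      _ = poch 1 (n+1) * (poch 1 k * ((k:ℝ)+1) * poch 1 (n+1))^2 := by ring
      _ ≤ poch 1 (n+1) * (poch 1 ((n+1)+k))^2 :=
          mul_le_mul_of_nonneg_left hC hr.le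
  linarith

lemma two_pow_bound (n : ℕ) : 6*(n:ℝ) + 7 ≤ 7 * 2^n := by
  induction n with
  | zero => norm_num
  | succ n ih =>
    rw [pow_succ]
    push_cast
    nlinarith [pow_pos (show (0:ℝ) < 2 by norm_num) n]

lemma FF_succ_le (k n : ℕ) :
    FF k (n+1) ≤ ((7/4)*(1/2:ℝ)^n + (k:ℝ)*(1/4)^n) * (1/((k:ℝ)+1)^2) := by
  have hbb : bb k (n+1) ≤ (1/4:ℝ)^(n+1) / ((k:ℝ)+1)^2 := by
    rw [le_div_iff₀ (by positivity)]
    calc bb k (n+1) * ((k:ℝ)+1)^2 = ((k:ℝ)+1)^2 * bb k (n+1) := by ring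
      _ ≤ (1/4)^(n+1) := bb_succ_le k n
  have hco : (0:ℝ) ≤ 6*((n:ℕ):ℝ)+6 + 4*(k:ℝ) + 1 := by positivity
  have h1 : FF k (n+1) ≤ (6*(n:ℝ) + 4*(k:ℝ) + 7) * ((1/4:ℝ)^(n+1) / ((k:ℝ)+1)^2) := by
    unfold FF
    push_cast
    have : (6*((n:ℝ)+1) + 4*(k:ℝ) + 1) = 6*(n:ℝ) + 4*(k:ℝ) + 7 := by ring
    rw [this]
    exact mul_le_mul_of_nonneg_left hbb (by positivity)
  refine h1.trans ?_
  rw [div_eq_mul_one_div, ← mul_assoc]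
  apply mul_le_mul_of_nonneg_right _ (by positivity)
  -- (6n+4k+7)*(1/4)^(n+1) ≤ (7/4)(1/2)^n + k(1/4)^n
  have h2 : (6*(n:ℝ)+7) * (1/4:ℝ)^(n+1) ≤ (7/4)*(1/2)^n := by
    have hq : ((1:ℝ)/4)^n = (1/2)^n * (1/2)^n := by
      rw [← mul_pow]; norm_num
    have h3 : (6*(n:ℝ)+7) * (1/2:ℝ)^n ≤ 7 := by
      have := two_pow_bound n
      have hpow : (0:ℝ) < (1/2:ℝ)^n := by positivity
      have h2n : ((1:ℝ)/2)^n * 2^n = 1 := by rw [← mul_pow]; norm_num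
      nlinarith [pow_pos (show (0:ℝ) < 2 by norm_num) n]
    calc (6*(n:ℝ)+7) * (1/4:ℝ)^(n+1) = ((6*(n:ℝ)+7) * (1/2)^n) * ((1/2)^n * (1/4)) := by
          rw [pow_succ, hq]; ring
      _ ≤ 7 * ((1/2)^n * (1/4)) := by
          apply mul_le_mul_of_nonneg_right h3 (by positivity)
      _ = (7/4)*(1/2)^n := by ring
  have h4 : (4*(k:ℝ)) * (1/4:ℝ)^(n+1) = (k:ℝ)*(1/4)^n := by
    rw [pow_succ]; ring
  nlinarith [pow_nonneg (show (0:ℝ) ≤ 1/4 by norm_num) (n+1)]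

lemma summable_FF (k : ℕ) : Summable (FF k) := by
  have hbnd : Summable (fun n : ℕ => (6*(n:ℝ) + 4*(k:ℝ) + 1) * ((poch (1/2) k)^2 * (1/4)^n)) := by
    have hgeo : Summable (fun n : ℕ => ((1:ℝ)/4)^n) :=
      summable_geometric_of_lt_one (by norm_num) (by norm_num)
    have hng : Summable (fun n : ℕ => (n:ℝ) * ((1:ℝ)/4)^n) := by
      have hn14 : ‖(1/4:ℝ)‖ < 1 := by
        rw [Real.norm_eq_abs, abs_of_nonneg (by norm_num : (0:ℝ) ≤ 1/4)]; norm_num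
      have := summable_pow_mul_geometric_of_norm_lt_one (R := ℝ) 1 hn14
      exact this.congr (fun n => by rw [pow_one])
    have := ((hng.mul_left (6 * (poch (1/2) k)^2)).add
      (hgeo.mul_left ((4*(k:ℝ)+1) * (poch (1/2) k)^2)))
    exact this.congr (fun n => by ring)
  apply Summable.of_nonneg_of_le (FF_nonneg k) _ hbnd
  intro n
  unfold FF
  exact mul_le_mul_of_nonneg_left (bb_le k n) (by positivity)

lemma tail_tendsto (k : ℕ) :
    Tendsto (fun N : ℕ => 8*(N:ℝ) * bb k N) atTop (𝓝 0) := by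
  have hsum : Summable (fun N : ℕ => 8*(N:ℝ) * ((poch (1/2) k)^2 * (1/4)^N)) := by
    have hng : Summable (fun n : ℕ => (n:ℝ) * ((1:ℝ)/4)^n) := by
      have hn14 : ‖(1/4:ℝ)‖ < 1 := by
        rw [Real.norm_eq_abs, abs_of_nonneg (by norm_num : (0:ℝ) ≤ 1/4)]; norm_num
      have := summable_pow_mul_geometric_of_norm_lt_one (R := ℝ) 1 hn14
      exact this.congr (fun n => by rw [pow_one])
    exact (hng.mul_left (8 * (poch (1/2) k)^2)).congr (fun n => by ring)
  have h0 := hsum.tendsto_atTop_zero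
  apply squeeze_zero (fun N => by have := (bb_pos k N).le; positivity) _ h0
  intro N
  exact mul_le_mul_of_nonneg_left (bb_le k N) (by positivity)

lemma sumdiff (k N : ℕ) :
    ∑ n ∈ Finset.range N, FF (k+1) n
      = (∑ n ∈ Finset.range N, FF k n) + 8*(N:ℝ)*bb k N := by
  induction N with
  | zero => simp
  | succ N ih =>
    rw [Finset.sum_range_succ, Finset.sum_range_succ, ih]
    have := key k N
    push_cast
    linarith

noncomputable def L (k : ℕ) : ℝ := ∑' n, FF k n

lemma hasSum_FF (k : ℕ) : HasSum (FF k) (L k) := (summable_FF k).hasSum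

lemma tendsto_partial (k : ℕ) :
    Tendsto (fun N => ∑ n ∈ Finset.range N, FF k n) atTop (𝓝 (L k)) :=
  (hasSum_FF k).tendsto_sum_nat

lemma L_succ (k : ℕ) : L (k+1) = L k := by
  have h1 := tendsto_partial (k+1)
  have h2 : Tendsto (fun N => ∑ n ∈ Finset.range N, FF (k+1) n) atTop (𝓝 (L k + 0)) := by
    have := (tendsto_partial k).add (tail_tendsto k)
    apply this.congr
    intro N
    exact (sumdiff k N).symm
  rw [add_zero] at h2
  exact tendsto_nhds_unique h1 h2

lemma L_const (k : ℕ) : L k = L 0 := by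
  induction k with
  | zero => rfl
  | succ k ih => rw [L_succ, ih]


lemma wallis_rel (k : ℕ) :
    Real.Wallis.W k * ((2*(k:ℝ)+1) * (poch (1/2) k)^2) = (poch 1 k)^2 := by
  induction k with
  | zero => simp [Real.Wallis.W, poch]
  | succ k ih =>
    rw [Real.Wallis.W_succ, poch_succ, poch_succ]
    have hq : (0:ℝ) < poch (1/2) k := poch_pos (by norm_num) k
    have hWk : Real.Wallis.W k = (poch 1 k)^2 / ((2*(k:ℝ)+1)*(poch (1/2) k)^2) := by
      rw [eq_div_iff (by positivity)]
      exact ih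
    rw [hWk]
    push_cast
    field_simp
    ring

lemma tendsto_inv_W : Tendsto (fun k => (Real.Wallis.W k)⁻¹) atTop (𝓝 (2/π)) := by
  have h := Real.Wallis.tendsto_W_nhds_pi_div_two
  have hne : (π/2 : ℝ) ≠ 0 := by positivity
  have := h.inv₀ hne
  convert this using 2
  exact (inv_div π 2).symm

lemma FF_zero (k : ℕ) :
    FF k 0 = (Real.Wallis.W k)⁻¹ * ((4*(k:ℝ)+1)/(2*(k:ℝ)+1)) := by
  have hs : (0:ℝ) < poch 1 k := poch_pos one_pos k
  have hq : (0:ℝ) < poch (1/2) k := poch_pos (by norm_num) k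
  have hW := Real.Wallis.W_pos k
  have hrel := wallis_rel k
  unfold FF bb
  simp only [Nat.zero_add, Nat.cast_zero, pow_zero]
  have h0 : poch (1/2) 0 = 1 := rfl
  have h1 : poch 1 0 = 1 := rfl
  rw [h0, h1]
  have h21 : (2*(k:ℝ)+1) ≠ 0 := by positivity
  field_simp
  linear_combination (4*(k:ℝ)+1) * hrel

lemma tendsto_FF_zero : Tendsto (fun k => FF k 0) atTop (𝓝 (4/π)) := by
  have ha : Tendsto (fun k : ℕ => (2*(k:ℝ)+1)) atTop atTop := by
    apply tendsto_atTop_add_const_right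
    exact Tendsto.const_mul_atTop two_pos tendsto_natCast_atTop_atTop
  have hinv : Tendsto (fun k : ℕ => (2*(k:ℝ)+1)⁻¹) atTop (𝓝 0) :=
    ha.inv_tendsto_atTop
  have h2 : Tendsto (fun k : ℕ => (4*(k:ℝ)+1)/(2*(k:ℝ)+1)) atTop (𝓝 2) := by
    have heq : ∀ k : ℕ, (4*(k:ℝ)+1)/(2*(k:ℝ)+1) = 2 - (2*(k:ℝ)+1)⁻¹ := by
      intro k
      have h21 : (2*(k:ℝ)+1) ≠ 0 := by positivity
      field_simp
      ring
    have := (tendsto_const_nhds (x := (2:ℝ)) (f := atTop)).sub hinv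
    rw [sub_zero] at this
    exact Tendsto.congr (fun k => (heq k).symm) this
  have := tendsto_inv_W.mul h2
  have hval : (2/π) * 2 = 4/π := by ring
  rw [hval] at this
  exact Tendsto.congr (fun k => (FF_zero k).symm) this

lemma summable_gbound (k : ℕ) :
    Summable (fun n : ℕ => ((7/4)*(1/2:ℝ)^n + (k:ℝ)*(1/4)^n) * (1/((k:ℝ)+1)^2)) := by
  have hg2 : Summable (fun n : ℕ => ((1:ℝ)/2)^n) :=
    summable_geometric_of_lt_one (by norm_num) (by norm_num)
  have hg4 : Summable (fun n : ℕ => ((1:ℝ)/4)^n) :=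
    summable_geometric_of_lt_one (by norm_num) (by norm_num)
  exact (((hg2.mul_left (7/4)).add (hg4.mul_left (k:ℝ))).mul_right _)

lemma tail_le (k : ℕ) : ∑' n, FF k (n+1) ≤ 5/((k:ℝ)+1) := by
  have hs_tail : Summable (fun n => FF k (n+1)) :=
    (summable_nat_add_iff 1).mpr (summable_FF k)
  have hg := summable_gbound k
  have h1 : ∑' n, FF k (n+1)
      ≤ ∑' n : ℕ, ((7/4)*(1/2:ℝ)^n + (k:ℝ)*(1/4)^n) * (1/((k:ℝ)+1)^2) :=
    Summable.tsum_le_tsum (fun n => FF_succ_le k n) hs_tail hg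
  have hval : ∑' n : ℕ, ((7/4)*(1/2:ℝ)^n + (k:ℝ)*(1/4)^n) * (1/((k:ℝ)+1)^2)
      = ((7/4)*2 + (k:ℝ)*(4/3)) * (1/((k:ℝ)+1)^2) := by
    rw [tsum_mul_right]
    congr 1
    have hg2 : Summable (fun n : ℕ => ((1:ℝ)/2)^n) :=
      summable_geometric_of_lt_one (by norm_num) (by norm_num)
    have hg4 : Summable (fun n : ℕ => ((1:ℝ)/4)^n) :=
      summable_geometric_of_lt_one (by norm_num) (by norm_num)
    rw [Summable.tsum_add (hg2.mul_left _) (hg4.mul_left _), tsum_mul_left, tsum_mul_left,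
      tsum_geometric_of_lt_one (by norm_num) (by norm_num),
      tsum_geometric_of_lt_one (by norm_num) (by norm_num)]
    norm_num
  rw [hval] at h1
  refine h1.trans ?_
  rw [div_eq_mul_one_div (5:ℝ)]
  have hk1 : (0:ℝ) < (k:ℝ)+1 := by positivity
  rw [show (1/((k:ℝ)+1)^2) = (1/((k:ℝ)+1))*(1/((k:ℝ)+1)) by
    rw [div_mul_div_comm, one_mul, sq]]
  have h5 : ((7/4:ℝ)*2 + (k:ℝ)*(4/3)) * (1/((k:ℝ)+1)) ≤ 5 := by
    rw [mul_one_div, div_le_iff₀ hk1]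
    nlinarith [Nat.cast_nonneg (α := ℝ) k]
  calc ((7/4:ℝ)*2 + (k:ℝ)*(4/3)) * ((1/((k:ℝ)+1))*(1/((k:ℝ)+1)))
      = (((7/4:ℝ)*2 + (k:ℝ)*(4/3)) * (1/((k:ℝ)+1))) * (1/((k:ℝ)+1)) := by ring
    _ ≤ 5 * (1/((k:ℝ)+1)) := by
        apply mul_le_mul_of_nonneg_right h5 (by positivity)

lemma tendsto_tail_k : Tendsto (fun k : ℕ => ∑' n, FF k (n+1)) atTop (𝓝 0) := by
  have hb : Tendsto (fun k : ℕ => ((k:ℝ)+1)) atTop atTop :=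
    tendsto_atTop_add_const_right _ 1 tendsto_natCast_atTop_atTop
  have h5 : Tendsto (fun k : ℕ => 5/((k:ℝ)+1)) atTop (𝓝 0) := by
    have := hb.inv_tendsto_atTop.const_mul (5:ℝ)
    rw [mul_zero] at this
    exact this.congr (fun k => by simp [div_eq_mul_inv])
  exact squeeze_zero (fun k => tsum_nonneg (fun n => FF_nonneg k (n+1)))
    (fun k => tail_le k) h5

lemma L_split (k : ℕ) : L k = FF k 0 + ∑' n, FF k (n+1) :=
  Summable.tsum_eq_zero_add (summable_FF k)

lemma L_zero_eq : L 0 = 4/π := by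
  have h1 : Tendsto L atTop (𝓝 (4/π)) := by
    have := tendsto_FF_zero.add tendsto_tail_k
    rw [add_zero] at this
    exact Tendsto.congr (fun k => (L_split k).symm) this
  have h2 : Tendsto L atTop (𝓝 (L 0)) := by
    have : L = fun _ => L 0 := funext L_const
    rw [this]
    exact tendsto_const_nhds
  exact tendsto_nhds_unique h2 h1


end Rama

open Rama in
theorem stmt_2 :
    Filter.Tendsto (fun N => ∑ n ∈ Finset.range N,
      (1/4 : ℝ)^n * (poch (1/2) n)^3 / (poch 1 n)^3 * (6*(n:ℝ)+1))
      Filter.atTop (nhds (4 / Real.pi)) := by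
  have h := (summable_FF 0).hasSum.tendsto_sum_nat
  rw [show (∑' n, FF 0 n) = L 0 from rfl, L_zero_eq] at h
  apply Tendsto.congr _ h
  intro N
  apply Finset.sum_congr rfl
  intro n _
  have hr : (0:ℝ) < poch 1 n := poch_pos one_pos n
  have h4 : (0:ℝ) < (4:ℝ)^n := by positivity
  unfold FF bb
  have h0 : poch (1/2) 0 = 1 := rfl
  simp only [Nat.cast_zero, Nat.add_zero, h0]
  field_simp
  have h44 : ((1:ℝ)/4)^n * 4^n = 1 := by rw [← mul_pow]; norm_num
  linear_combination (-((n:ℝ) * poch (1/2) n ^ 3 * 6 + poch (1/2) n ^ 3)) * h44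
end

section
/- For every nonnegative integer k: ∑_{n=0}^∞ (1/2)^n · ((1/2+k)_n (1/3)_n (2/3)_n)/((1+k)_n (1+2k)_n (1)_n) · (6n+6k+1) = (3√3/π) · ((1)_k^2)/((1/3)_k (2/3)_k). -/
open Filter Real Nat

lemma poch_zero (x : ℝ) : poch x 0 = 1 := rfl
lemma poch_succ (x : ℝ) (n : ℕ) : poch x (n+1) = poch x n * (x + n) := rfl

lemma poch_pos {x : ℝ} (hx : 0 < x) (n : ℕ) : 0 < poch x n := by
  induction n with
  | zero => norm_num [poch]
  | succ n ih => rw [poch_succ]; positivity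

lemma poch_nonneg {x : ℝ} (hx : 0 < x) (n : ℕ) : 0 ≤ poch x n := (poch_pos hx n).le

lemma poch_le {x y : ℝ} (hx : 0 < x) (hxy : x ≤ y) (n : ℕ) : poch x n ≤ poch y n := by
  induction n with
  | zero => exact le_refl _
  | succ n ih =>
    rw [poch_succ, poch_succ]
    have h1 : (0:ℝ) < x + n := by positivity
    exact mul_le_mul ih (by linarith) h1.le ((poch_pos (lt_of_lt_of_le hx hxy) n).le)

lemma poch_shift (x : ℝ) (n : ℕ) : poch x (n+1) = x * poch (x+1) n := by
  induction n with
  | zero => simp [poch]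
  | succ n ih =>
    rw [poch_succ, ih, poch_succ]
    push_cast
    ring

lemma poch_prod (x : ℝ) (n : ℕ) : poch x n = ∏ j ∈ Finset.range n, (x + j) := by
  induction n with
  | zero => simp [poch]
  | succ n ih => rw [poch_succ, ih, Finset.prod_range_succ]

noncomputable def bb (k n : ℕ) : ℝ :=
  (1/2 : ℝ)^n * (poch (1/2 + k) n * poch (1/3) n * poch (2/3) n) /
    (poch (1 + k) n * poch (1 + 2*k) n * poch 1 n)

noncomputable def tt (k n : ℕ) : ℝ := bb k n * (6*(n:ℝ)+6*(k:ℝ)+1)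

noncomputable def ww (k : ℕ) : ℝ := poch (1/3) k * poch (2/3) k / (poch 1 k)^2

noncomputable def GG (k n : ℕ) : ℝ :=
  4*(n:ℝ)*(3*(n:ℝ)+3*(k:ℝ)+2)/((n:ℝ)+2*(k:ℝ)+1) * ww k * bb k n

lemma bb_pos (k n : ℕ) : 0 < bb k n := by
  have h1 : (0:ℝ) < 1/2 + k := by positivity
  have h2 : (0:ℝ) < 1 + k := by positivity
  have h3 : (0:ℝ) < 1 + 2*(k:ℝ) := by positivity
  unfold bb
  have := poch_pos h1 n
  have := poch_pos h2 n
  have := poch_pos h3 n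
  have := poch_pos (by norm_num : (0:ℝ) < 1/3) n
  have := poch_pos (by norm_num : (0:ℝ) < 2/3) n
  have := poch_pos (by norm_num : (0:ℝ) < 1) n
  positivity

lemma ww_pos (k : ℕ) : 0 < ww k := by
  unfold ww
  have := poch_pos (by norm_num : (0:ℝ) < 1/3) k
  have := poch_pos (by norm_num : (0:ℝ) < 2/3) k
  have := poch_pos (by norm_num : (0:ℝ) < 1) k
  positivity

lemma ww_succ (k : ℕ) : ww (k+1) = ww k * ((1/3+(k:ℝ))*(2/3+(k:ℝ))/((1+(k:ℝ))^2)) := by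
  have h1 := poch_pos (by norm_num : (0:ℝ) < 1) k
  unfold ww
  rw [poch_succ, poch_succ, poch_succ]
  field_simp

lemma bb_k_succ (k n : ℕ) : bb (k+1) n =
    bb k n * ((1/2+(k:ℝ)+n) * (1+(k:ℝ)) * (1+2*(k:ℝ)) * (2+2*(k:ℝ))) /
      ((1/2+(k:ℝ)) * (1+(k:ℝ)+n) * (1+2*(k:ℝ)+n) * (2+2*(k:ℝ)+n)) := by
  have e1 : (1/2 + ((k:ℝ)+1)) = (1/2 + k) + 1 := by ring
  have e2 : (1 + ((k:ℝ)+1)) = (1 + k) + 1 := by ring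
  have e3 : (1 + 2*((k:ℝ)+1)) = ((1 + 2*k) + 1) + 1 := by ring
  have s1 := poch_shift (1/2 + (k:ℝ)) n
  have s2 := poch_shift (1 + (k:ℝ)) n
  have s3 := poch_shift (1 + 2*(k:ℝ)) n
  have s4 := poch_shift (1 + 2*(k:ℝ) + 1) n
  have t1 := poch_succ (1/2 + (k:ℝ)) n
  have t2 := poch_succ (1 + (k:ℝ)) n
  have t3 := poch_succ (1 + 2*(k:ℝ)) n
  have t4 := poch_succ (1 + 2*(k:ℝ) + 1) n
  -- derive shifted poch values
  have hk2 : (0:ℝ) < 1/2 + k := by positivity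
  have hk1 : (0:ℝ) < 1 + k := by positivity
  have hk3 : (0:ℝ) < 1 + 2*(k:ℝ) := by positivity
  have hk4 : (0:ℝ) < 1 + 2*(k:ℝ) + 1 := by positivity
  have p1 : poch ((1/2+(k:ℝ))+1) n = poch (1/2+(k:ℝ)) n * (1/2+(k:ℝ)+n) / (1/2+(k:ℝ)) := by
    rw [eq_div_iff hk2.ne']
    have := s1.symm.trans t1
    linarith [this]
  have p2 : poch ((1+(k:ℝ))+1) n = poch (1+(k:ℝ)) n * (1+(k:ℝ)+n) / (1+(k:ℝ)) := by
    rw [eq_div_iff hk1.ne']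
    have := s2.symm.trans t2
    linarith [this]
  have p3 : poch ((1+2*(k:ℝ))+1) n = poch (1+2*(k:ℝ)) n * (1+2*(k:ℝ)+n) / (1+2*(k:ℝ)) := by
    rw [eq_div_iff hk3.ne']
    have := s3.symm.trans t3
    linarith [this]
  have p4 : poch ((1+2*(k:ℝ)+1)+1) n = poch (1+2*(k:ℝ)+1) n * (1+2*(k:ℝ)+1+n) / (1+2*(k:ℝ)+1) := by
    rw [eq_div_iff hk4.ne']
    have := s4.symm.trans t4
    linarith [this]
  unfold bb
  push_cast
  rw [e1, e2, e3, p1, p2, p4, p3]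
  have P1 := poch_pos hk2 n
  have P2 := poch_pos hk1 n
  have P3 := poch_pos hk3 n
  have P5 := poch_pos (by norm_num : (0:ℝ) < 1) n
  have hn0 : (0:ℝ) ≤ n := Nat.cast_nonneg n
  have d1 : (1/2+(k:ℝ)+n) ≠ 0 := by positivity
  have d2 : (1+(k:ℝ)+n) ≠ 0 := by positivity
  have d3 : (1+2*(k:ℝ)+n) ≠ 0 := by positivity
  have d4 : (2+2*(k:ℝ)+n) ≠ 0 := by positivity
  have d5 : (1+2*(k:ℝ)+1+n) ≠ 0 := by positivity
  field_simp
  ring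

lemma bb_n_succ (k n : ℕ) : bb k (n+1) =
    bb k n * ((1/2) * (1/2+(k:ℝ)+n) * (1/3+(n:ℝ)) * (2/3+(n:ℝ))) /
      ((1+(k:ℝ)+n) * (1+2*(k:ℝ)+n) * (1+(n:ℝ))) := by
  unfold bb
  rw [poch_succ (1/2 + (k:ℝ)), poch_succ (1/3), poch_succ (2/3),
    poch_succ (1 + (k:ℝ)), poch_succ (1 + 2*(k:ℝ)), poch_succ 1]
  have hk2 : (0:ℝ) < 1/2 + k := by positivity
  have hk1 : (0:ℝ) < 1 + k := by positivity
  have hk3 : (0:ℝ) < 1 + 2*(k:ℝ) := by positivity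
  have P1 := poch_pos hk2 n
  have P2 := poch_pos hk1 n
  have P3 := poch_pos hk3 n
  have P5 := poch_pos (by norm_num : (0:ℝ) < 1) n
  have hn0 : (0:ℝ) ≤ n := Nat.cast_nonneg n
  have d2 : (1+(k:ℝ)+n) ≠ 0 := by positivity
  have d3 : (1+2*(k:ℝ)+n) ≠ 0 := by positivity
  have d6 : (1+(n:ℝ)) ≠ 0 := by positivity
  push_cast
  field_simp
  ring

lemma L1 (k n : ℕ) :
    ww (k+1) * tt (k+1) n - ww k * tt k n = GG k (n+1) - GG k n := by
  unfold tt GG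
  rw [ww_succ, bb_k_succ, bb_n_succ]
  have hn0 : (0:ℝ) ≤ n := Nat.cast_nonneg n
  have hk0 : (0:ℝ) ≤ k := Nat.cast_nonneg k
  have d1 : (1/2+(k:ℝ)+(n:ℝ)) ≠ 0 := by positivity
  have d2 : (1+(k:ℝ)+(n:ℝ)) ≠ 0 := by positivity
  have d3 : (1+2*(k:ℝ)+(n:ℝ)) ≠ 0 := by positivity
  have d4 : (2+2*(k:ℝ)+(n:ℝ)) ≠ 0 := by positivity
  have d5 : (1+(n:ℝ)) ≠ 0 := by positivity
  have d6 : (1/2+(k:ℝ)) ≠ 0 := by positivity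
  have d7 : (1+(k:ℝ)) ≠ 0 := by positivity
  have d8 : (1+2*(k:ℝ)) ≠ 0 := by positivity
  have d9 : (2+2*(k:ℝ)) ≠ 0 := by positivity
  have d10 : ((n:ℝ)+2*(k:ℝ)+1) ≠ 0 := by positivity
  have d11 : ((n:ℝ)+1+2*(k:ℝ)+1) ≠ 0 := by positivity
  push_cast
  field_simp
  ring

lemma GG_zero (k : ℕ) : GG k 0 = 0 := by simp [GG]

lemma tele (k : ℕ) (N : ℕ) :
    ww (k+1) * (∑ n ∈ Finset.range N, tt (k+1) n) -
      ww k * (∑ n ∈ Finset.range N, tt k n) = GG k N := by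
  rw [Finset.mul_sum, Finset.mul_sum, ← Finset.sum_sub_distrib]
  have : ∀ n ∈ Finset.range N, ww (k+1) * tt (k+1) n - ww k * tt k n
      = GG k (n+1) - GG k n := fun n _ => L1 k n
  rw [Finset.sum_congr rfl this, Finset.sum_range_sub (GG k), GG_zero, sub_zero]

lemma bb_le (k n : ℕ) : bb k n ≤ (1/2)^n := by
  have hk2 : (0:ℝ) < 1/2 + k := by positivity
  have hk1 : (0:ℝ) < 1 + k := by positivity
  have hk3 : (0:ℝ) < 1 + 2*(k:ℝ) := by positivity
  have P1 := poch_pos hk2 n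
  have P2 := poch_pos hk1 n
  have P3 := poch_pos hk3 n
  have P4 := poch_pos (by norm_num : (0:ℝ) < 1/3) n
  have P5 := poch_pos (by norm_num : (0:ℝ) < 2/3) n
  have P6 := poch_pos (by norm_num : (0:ℝ) < 1) n
  have h1 : poch (1/2 + (k:ℝ)) n ≤ poch (1 + k) n := poch_le hk2 (by linarith [Nat.cast_nonneg (α := ℝ) k]) n
  have h2 : poch (1/3 : ℝ) n ≤ poch 1 n := poch_le (by norm_num) (by norm_num) n
  have h3 : poch (2/3 : ℝ) n ≤ poch (1 + 2*(k:ℝ)) n :=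
    poch_le (by norm_num) (by linarith [Nat.cast_nonneg (α := ℝ) k]) n
  unfold bb
  rw [div_le_iff₀ (by positivity)]
  have key : poch (1/2 + (k:ℝ)) n * poch (1/3) n * poch (2/3) n ≤
      poch (1 + (k:ℝ)) n * poch (1 + 2*(k:ℝ)) n * poch 1 n := by
    calc poch (1/2 + (k:ℝ)) n * poch (1/3) n * poch (2/3) n
        ≤ poch (1 + (k:ℝ)) n * poch 1 n * poch (1 + 2*(k:ℝ)) n := by
          apply mul_le_mul (mul_le_mul h1 h2 P4.le P2.le) h3 P5.le (by positivity)
      _ = poch (1 + (k:ℝ)) n * poch (1 + 2*(k:ℝ)) n * poch 1 n := by ring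
  nlinarith [pow_pos (by norm_num : (0:ℝ) < 1/2) n]

lemma ww_le (k : ℕ) : ww k ≤ 1/((k:ℝ)+1) := by
  induction k with
  | zero => simp [ww, poch]
  | succ k ih =>
    rw [ww_succ]
    have hw := ww_pos k
    have hk0 : (0:ℝ) ≤ k := Nat.cast_nonneg k
    have h1 : ((1/3+(k:ℝ))*(2/3+(k:ℝ))/((1+(k:ℝ))^2)) ≤ ((k:ℝ)+1)/((k:ℝ)+2) := by
      rw [div_le_div_iff₀ (by positivity) (by positivity)]
      nlinarith
    have h2 : (0:ℝ) < (1/3+(k:ℝ))*(2/3+(k:ℝ))/((1+(k:ℝ))^2) := by positivity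
    calc ww k * ((1/3+(k:ℝ))*(2/3+(k:ℝ))/((1+(k:ℝ))^2))
        ≤ (1/((k:ℝ)+1)) * (((k:ℝ)+1)/((k:ℝ)+2)) := by
          apply mul_le_mul ih h1 h2.le (by positivity)
      _ = 1/((k:ℝ)+2) := by rw [_root_.div_mul_div_comm, one_mul]; rw [div_eq_div_iff (by positivity) (by positivity)]; ring
      _ = 1/(((k:ℕ):ℝ)+1+1) := by ring_nf
      _ = 1/((((k+1):ℕ):ℝ)+1) := by push_cast; ring
    
lemma ww_le_one (k : ℕ) : ww k ≤ 1 := by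
  have := ww_le k
  have hk0 : (0:ℝ) ≤ k := Nat.cast_nonneg k
  have : (1:ℝ)/((k:ℝ)+1) ≤ 1 := by
    rw [div_le_one (by positivity)]; linarith
  linarith [ww_le k]

lemma tt_pos (k n : ℕ) : 0 < tt k n := by
  unfold tt
  have := bb_pos k n
  have hn0 : (0:ℝ) ≤ n := Nat.cast_nonneg n
  have hk0 : (0:ℝ) ≤ k := Nat.cast_nonneg k
  positivity

lemma tt_le (k n : ℕ) : tt k n ≤ (6*(k:ℝ)+1) * (1/2)^n + 6 * (n * (1/2)^n) := by
  unfold tt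
  have h := bb_le k n
  have hb := bb_pos k n
  have hn0 : (0:ℝ) ≤ n := Nat.cast_nonneg n
  have hk0 : (0:ℝ) ≤ k := Nat.cast_nonneg k
  have hp : (0:ℝ) < (1/2)^n := by positivity
  nlinarith

lemma summable_tt (k : ℕ) : Summable (tt k) := by
  have h1 : Summable (fun n : ℕ => (6*(k:ℝ)+1) * (1/2)^n) :=
    (summable_geometric_of_lt_one (by norm_num) (by norm_num)).mul_left _
  have h2 : Summable (fun n : ℕ => 6 * ((n:ℝ) * (1/2)^n)) := by
    have := summable_pow_mul_geometric_of_norm_lt_one (R := ℝ) 1 (r := 1/2) (by norm_num)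
    simpa [pow_one] using this.mul_left 6
  exact Summable.of_nonneg_of_le (fun n => (tt_pos k n).le) (fun n => tt_le k n) (h1.add h2)

lemma GG_tendsto (k : ℕ) : Tendsto (fun N => GG k N) atTop (nhds 0) := by
  have hb : ∀ n : ℕ, |GG k n| ≤ 12 * ((n:ℝ)^2 * (1/2)^n) + (12*(k:ℝ)+8) * ((n:ℝ) * (1/2)^n) := by
    intro n
    have hn0 : (0:ℝ) ≤ n := Nat.cast_nonneg n
    have hk0 : (0:ℝ) ≤ k := Nat.cast_nonneg k
    have hG : 0 ≤ GG k n := by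
      unfold GG
      have := (bb_pos k n).le
      have := (ww_pos k).le
      positivity
    rw [abs_of_nonneg hG]
    unfold GG
    have h1 : bb k n ≤ (1/2)^n := bb_le k n
    have h2 : ww k ≤ 1 := ww_le_one k
    have hb0 := (bb_pos k n).le
    have hw0 := (ww_pos k).le
    have hd : (1:ℝ) ≤ (n:ℝ)+2*(k:ℝ)+1 := by linarith
    have hc : 4*(n:ℝ)*(3*(n:ℝ)+3*(k:ℝ)+2)/((n:ℝ)+2*(k:ℝ)+1) ≤ 4*(n:ℝ)*(3*(n:ℝ)+3*(k:ℝ)+2) := by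
      apply div_le_self (by positivity) hd
    calc 4*(n:ℝ)*(3*(n:ℝ)+3*(k:ℝ)+2)/((n:ℝ)+2*(k:ℝ)+1) * ww k * bb k n
        ≤ 4*(n:ℝ)*(3*(n:ℝ)+3*(k:ℝ)+2) * 1 * (1/2)^n := by
          apply mul_le_mul _ h1 hb0 (by positivity)
          apply mul_le_mul hc h2 hw0 (by positivity)
      _ = 12 * ((n:ℝ)^2 * (1/2)^n) + (12*(k:ℝ)+8) * ((n:ℝ) * (1/2)^n) := by ring
  have hs : Summable (fun n : ℕ => 12 * ((n:ℝ)^2 * (1/2)^n) + (12*(k:ℝ)+8) * ((n:ℝ) * (1/2)^n)) := by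
    have h1 := summable_pow_mul_geometric_of_norm_lt_one (R := ℝ) 2 (r := 1/2) (by norm_num)
    have h2 := summable_pow_mul_geometric_of_norm_lt_one (R := ℝ) 1 (r := 1/2) (by norm_num)
    simpa [pow_one] using (h1.mul_left 12).add (h2.mul_left (12*(k:ℝ)+8))
  have h0 := hs.tendsto_atTop_zero
  have := squeeze_zero (f := fun n : ℕ => |GG k n|) (fun n => abs_nonneg _) hb h0
  exact tendsto_zero_iff_abs_tendsto_zero (fun N => GG k N) |>.mpr this

noncomputable def SS (k : ℕ) : ℝ := ∑' n, tt k n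

lemma hasSum_tt (k : ℕ) : HasSum (tt k) (SS k) := (summable_tt k).hasSum

lemma ww_zero : ww 0 = 1 := by simp [ww, poch]

lemma wS (k : ℕ) : ww k * SS k = SS 0 := by
  induction k with
  | zero => rw [ww_zero, one_mul]
  | succ k ih =>
    have h1 : Tendsto (fun N => ww (k+1) * (∑ n ∈ Finset.range N, tt (k+1) n) -
        ww k * (∑ n ∈ Finset.range N, tt k n)) atTop
        (nhds (ww (k+1) * SS (k+1) - ww k * SS k)) :=
      (((hasSum_tt (k+1)).tendsto_sum_nat).const_mul _).sub
        (((hasSum_tt k).tendsto_sum_nat).const_mul _)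
    have h2 : Tendsto (fun N => GG k N) atTop (nhds (ww (k+1) * SS (k+1) - ww k * SS k)) :=
      h1.congr (fun N => tele k N)
    have h3 := tendsto_nhds_unique h2 (GG_tendsto k)
    rw [← ih]
    linarith

lemma poch_one_eq (n : ℕ) : poch 1 n = n ! := by
  induction n with
  | zero => simp [poch]
  | succ n ih => rw [poch_succ, ih, Nat.factorial_succ]; push_cast; ring

lemma gammaSeq_eq (x : ℝ) (n : ℕ) :
    Real.GammaSeq x n = (n:ℝ)^x * (n ! : ℝ) / poch x (n+1) := by
  rw [Real.GammaSeq, poch_prod]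

lemma term0_tendsto :
    Tendsto (fun k : ℕ => ww k * tt k 0) atTop (nhds (3 * Real.sqrt 3 / Real.pi)) := by
  have htt0 : ∀ k : ℕ, tt k 0 = 6*(k:ℝ)+1 := by
    intro k; simp [tt, bb, poch]
  have h3 : Real.sqrt 3 ≠ 0 := (Real.sqrt_pos.mpr (by norm_num)).ne'
  have key : Tendsto (fun k : ℕ => ww k * (6*(k:ℝ)+1)) atTop (nhds (3 * Real.sqrt 3 / Real.pi)) := by
    rw [← tendsto_add_atTop_iff_nat 1]
    have hG1 := Real.GammaSeq_tendsto_Gamma (1/3)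
    have hG2 := Real.GammaSeq_tendsto_Gamma (2/3)
    have hGprod : Tendsto (fun n : ℕ => Real.GammaSeq (1/3) n * Real.GammaSeq (2/3) n) atTop
        (nhds (Real.Gamma (1/3) * Real.Gamma (2/3))) := hG1.mul hG2
    have hGval : Real.Gamma (1/3) * Real.Gamma (2/3) = 2 * Real.pi / Real.sqrt 3 := by
      have h := Real.Gamma_mul_Gamma_one_sub (1/3)
      norm_num at h
      rw [h]
      have e : Real.pi * (1/3) = Real.pi / 3 := by ring
      rw [e, Real.sin_pi_div_three]
      rw [div_div_eq_mul_div]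
      ring
    have hinv : Tendsto (fun n : ℕ => 1/(n:ℝ)) atTop (nhds 0) := tendsto_one_div_atTop_nhds_zero_nat
    have hnum : Tendsto (fun n : ℕ => (6 + 7*(1/(n:ℝ))) / ((1 + 1/(n:ℝ))^2)) atTop (nhds 6) := by
      have h1 : Tendsto (fun n : ℕ => 6 + 7*(1/(n:ℝ))) atTop (nhds 6) := by
        have := (hinv.const_mul 7).const_add 6
        simpa using this
      have h2 : Tendsto (fun n : ℕ => (1 + 1/(n:ℝ))^2) atTop (nhds 1) := by
        have := ((hinv.const_add 1).pow 2)
        simpa using this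
      have := h1.div h2 (by norm_num); rw [div_one] at this; exact this
    have hfull : Tendsto (fun n : ℕ => (6 + 7*(1/(n:ℝ))) / ((1 + 1/(n:ℝ))^2) /
        (Real.GammaSeq (1/3) n * Real.GammaSeq (2/3) n)) atTop
        (nhds (3 * Real.sqrt 3 / Real.pi)) := by
      have hval : 6 / (2 * Real.pi / Real.sqrt 3) = 3 * Real.sqrt 3 / Real.pi := by
        have hpi := Real.pi_pos
        rw [div_div_eq_mul_div, div_eq_div_iff (by positivity) (by positivity)]
        ring
      rw [← hval, ← hGval]
      apply hnum.div hGprod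
      rw [hGval]
      positivity
    apply hfull.congr'
    filter_upwards [eventually_ge_atTop 1] with n hn
    have hn0 : (0:ℝ) < n := by exact_mod_cast Nat.pos_of_ne_zero (by omega)
    have hP1 := poch_pos (by norm_num : (0:ℝ) < 1/3) (n+1)
    have hP2 := poch_pos (by norm_num : (0:ℝ) < 2/3) (n+1)
    have hfac : (0:ℝ) < (n ! : ℝ) := by exact_mod_cast Nat.factorial_pos n
    have hr1 : (0:ℝ) < (n:ℝ)^((1:ℝ)/3) := Real.rpow_pos_of_pos hn0 _
    have hr2 : (0:ℝ) < (n:ℝ)^((2:ℝ)/3) := Real.rpow_pos_of_pos hn0 _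
    have hmul : (n:ℝ)^((1:ℝ)/3) * (n:ℝ)^((2:ℝ)/3) = (n:ℝ) := by
      rw [← Real.rpow_add hn0]
      norm_num
    have hG12 : Real.GammaSeq (1/3) n * Real.GammaSeq (2/3) n =
        (n:ℝ) * ((n ! : ℝ))^2 / (poch (1/3) (n+1) * poch (2/3) (n+1)) := by
      rw [gammaSeq_eq, gammaSeq_eq, _root_.div_mul_div_comm]
      congr 1
      rw [show (n:ℝ)^((1:ℝ)/3) * (n ! : ℝ) * ((n:ℝ)^((2:ℝ)/3) * (n ! : ℝ))
          = ((n:ℝ)^((1:ℝ)/3) * (n:ℝ)^((2:ℝ)/3)) * ((n ! : ℝ))^2 from by ring, hmul]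
    rw [hG12]
    show _ = ww (n+1) * (6*((n+1:ℕ):ℝ)+1)
    rw [ww, poch_one_eq (n+1)]
    have hfs : ((n+1)! : ℝ) = ((n:ℝ)+1) * (n ! : ℝ) := by
      push_cast [Nat.factorial_succ]
      ring
    rw [hfs]
    push_cast
    field_simp
    ring
  exact key.congr (fun k => by rw [htt0 k])

lemma bb_le2 (k m : ℕ) : bb k (m+1) ≤ 1/(1+2*(k:ℝ)) := by
  have hk0 : (0:ℝ) ≤ k := Nat.cast_nonneg k
  have hk2 : (0:ℝ) < 1/2 + k := by positivity
  have hk1 : (0:ℝ) < 1 + k := by positivity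
  have hk3 : (0:ℝ) < 1 + 2*(k:ℝ) := by positivity
  have P1 := poch_pos hk2 (m+1)
  have Q1 := poch_pos hk1 (m+1)
  have Q2 := poch_pos hk3 (m+1)
  have P6 := poch_pos (by norm_num : (0:ℝ) < 1) (m+1)
  have h1 : poch (1/2 + (k:ℝ)) (m+1) ≤ poch (1 + k) (m+1) := poch_le hk2 (by linarith) (m+1)
  have h2 : poch (1/3 : ℝ) (m+1) ≤ poch 1 (m+1) := poch_le (by norm_num) (by norm_num) (m+1)
  have h3 : poch (2/3 : ℝ) (m+1) ≤ poch 1 (m+1) := poch_le (by norm_num) (by norm_num) (m+1)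
  have hq2 : (1+2*(k:ℝ)) * poch 1 (m+1) ≤ poch (1+2*(k:ℝ)) (m+1) := by
    rw [poch_shift (1+2*(k:ℝ)) m]
    have e : poch 1 (m+1) = poch 2 m := by rw [poch_shift 1 m, one_mul]; norm_num
    rw [e]
    have : poch 2 m ≤ poch (1+2*(k:ℝ)+1) m := poch_le (by norm_num) (by linarith) m
    nlinarith [poch_pos (by norm_num : (0:ℝ) < 2) m]
  have hA : poch (1/2 + (k:ℝ)) (m+1) * poch (1/3) (m+1) * poch (2/3) (m+1)
      ≤ poch (1 + (k:ℝ)) (m+1) * poch 1 (m+1) * poch 1 (m+1) := by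
    apply mul_le_mul (mul_le_mul h1 h2 (poch_pos (by norm_num) (m+1)).le Q1.le) h3
      (poch_pos (by norm_num) (m+1)).le (by positivity)
  unfold bb
  have hpow : ((1:ℝ)/2)^(m+1) ≤ 1 := pow_le_one₀ (by norm_num) (by norm_num)
  rw [div_le_div_iff₀ (by positivity) (by positivity)]
  have hA0 : (0:ℝ) ≤ poch (1/2 + (k:ℝ)) (m+1) * poch (1/3) (m+1) * poch (2/3) (m+1) :=
    mul_nonneg (mul_nonneg P1.le (poch_pos (by norm_num) (m+1)).le) (poch_pos (by norm_num) (m+1)).le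
  have f1 := mul_le_mul_of_nonneg_right hA hk3.le
  have f2 := mul_le_mul_of_nonneg_left hq2 (mul_nonneg Q1.le P6.le)
  have f3 := mul_le_mul_of_nonneg_right (mul_le_mul_of_nonneg_right hpow hA0) hk3.le
  nlinarith [f1, f2, f3]

lemma termn_tendsto (m : ℕ) :
    Tendsto (fun k : ℕ => ww k * tt k (m+1)) atTop (nhds 0) := by
  have hub : ∀ k : ℕ, ww k * tt k (m+1) ≤ (6*(m:ℝ)+7) * (1/((k:ℝ)+1)) := by
    intro k
    have hk0 : (0:ℝ) ≤ k := Nat.cast_nonneg k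
    have hm0 : (0:ℝ) ≤ m := Nat.cast_nonneg m
    have hL : (0:ℝ) < 6*(m:ℝ)+6+6*(k:ℝ)+1 := by positivity
    have hw0 := (ww_pos k).le
    have hb0 := (bb_pos k (m+1)).le
    have hwle := ww_le k
    have hble := bb_le2 k m
    have hq : ww k * ((k:ℝ)+1) ≤ 1 := by
      rw [le_div_iff₀ (by positivity)] at hwle
      linarith
    have hq2 : bb k (m+1) * (1+2*(k:ℝ)) ≤ 1 := by
      rw [le_div_iff₀ (by positivity)] at hble
      linarith
    have htt : tt k (m+1) = bb k (m+1) * (6*(m:ℝ)+6+6*(k:ℝ)+1) := by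
      unfold tt
      push_cast
      ring
    have step1 : ww k * tt k (m+1) * ((k:ℝ)+1) ≤ 6*(m:ℝ)+7 := by
      rw [htt]
      have c1 : ww k * (bb k (m+1) * (6*(m:ℝ)+6+6*(k:ℝ)+1)) * ((k:ℝ)+1)
          = (ww k * ((k:ℝ)+1)) * (bb k (m+1) * (6*(m:ℝ)+6+6*(k:ℝ)+1)) := by ring
      rw [c1]
      have c2 : (ww k * ((k:ℝ)+1)) * (bb k (m+1) * (6*(m:ℝ)+6+6*(k:ℝ)+1))
          ≤ 1 * (bb k (m+1) * (6*(m:ℝ)+6+6*(k:ℝ)+1)) :=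
        mul_le_mul_of_nonneg_right hq (by positivity)
      have c3 : bb k (m+1) * (6*(m:ℝ)+6+6*(k:ℝ)+1) ≤ (6*(m:ℝ)+7) := by
        have hLle : (6*(m:ℝ)+6+6*(k:ℝ)+1) ≤ (6*(m:ℝ)+7)*(1+2*(k:ℝ)) := by nlinarith
        calc bb k (m+1) * (6*(m:ℝ)+6+6*(k:ℝ)+1)
            ≤ bb k (m+1) * ((6*(m:ℝ)+7)*(1+2*(k:ℝ))) := mul_le_mul_of_nonneg_left hLle hb0
          _ = (6*(m:ℝ)+7) * (bb k (m+1) * (1+2*(k:ℝ))) := by ring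
          _ ≤ (6*(m:ℝ)+7) * 1 := mul_le_mul_of_nonneg_left hq2 (by positivity)
          _ = 6*(m:ℝ)+7 := mul_one _
      linarith
    rw [mul_one_div, le_div_iff₀ (by positivity : (0:ℝ) < (k:ℝ)+1)]
    exact step1
  have hlb : ∀ k : ℕ, (0:ℝ) ≤ ww k * tt k (m+1) :=
    fun k => mul_nonneg (ww_pos k).le (tt_pos k (m+1)).le
  have hup : Tendsto (fun k : ℕ => (6*(m:ℝ)+7) * (1/((k:ℝ)+1))) atTop (nhds 0) := by
    have := tendsto_one_div_add_atTop_nhds_zero_nat.const_mul (6*(m:ℝ)+7)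
    simpa using this
  exact squeeze_zero hlb hub hup

lemma bound_summable : Summable (fun n : ℕ => (6*(n:ℝ)+6)*(1/2)^n) := by
  have h1 : Summable (fun n : ℕ => 6 * ((n:ℝ) * (1/2)^n)) := by
    have := summable_pow_mul_geometric_of_norm_lt_one (R := ℝ) 1 (r := 1/2) (by norm_num)
    simpa [pow_one] using this.mul_left 6
  have h2 : Summable (fun n : ℕ => 6 * ((1:ℝ)/2)^n) :=
    (summable_geometric_of_lt_one (by norm_num) (by norm_num)).mul_left 6
  have := h1.add h2
  apply this.congr
  intro n
  ring

lemma bound_le (k n : ℕ) : ‖ww k * tt k n‖ ≤ (6*(n:ℝ)+6)*(1/2)^n := by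
  have h0 : 0 ≤ ww k * tt k n := mul_nonneg (ww_pos k).le (tt_pos k n).le
  rw [Real.norm_eq_abs, abs_of_nonneg h0]
  have hk0 : (0:ℝ) ≤ k := Nat.cast_nonneg k
  have hn0 : (0:ℝ) ≤ n := Nat.cast_nonneg n
  have hL : (0:ℝ) < 6*(n:ℝ)+6*(k:ℝ)+1 := by positivity
  have hw0 := (ww_pos k).le
  have hw1 := ww_le_one k
  have hq : ww k * ((k:ℝ)+1) ≤ 1 := by
    have hwle := ww_le k
    rw [le_div_iff₀ (by positivity)] at hwle
    linarith
  have hble := bb_le k n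
  have hb0 := (bb_pos k n).le
  have hp0 : (0:ℝ) < (1/2)^n := by positivity
  have step1 : ww k * tt k n ≤ ww k * ((1/2)^n * (6*(n:ℝ)+6*(k:ℝ)+1)) := by
    unfold tt
    exact mul_le_mul_of_nonneg_left (mul_le_mul_of_nonneg_right hble hL.le) hw0
  have step2 : ww k * (6*(n:ℝ)+6*(k:ℝ)+1) ≤ 6*(n:ℝ)+6 := by
    nlinarith [mul_nonneg hn0 (sub_nonneg.mpr hw1)]
  calc ww k * tt k n ≤ ww k * ((1/2)^n * (6*(n:ℝ)+6*(k:ℝ)+1)) := step1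
    _ = (1/2)^n * (ww k * (6*(n:ℝ)+6*(k:ℝ)+1)) := by ring
    _ ≤ (1/2)^n * (6*(n:ℝ)+6) := mul_le_mul_of_nonneg_left step2 hp0.le
    _ = (6*(n:ℝ)+6)*(1/2)^n := by ring

lemma SS0_val : SS 0 = 3 * Real.sqrt 3 / Real.pi := by
  have hab : ∀ n : ℕ, Tendsto (fun k : ℕ => ww k * tt k n) atTop
      (nhds (if n = 0 then 3 * Real.sqrt 3 / Real.pi else 0)) := by
    intro n
    match n with
    | 0 => simpa using term0_tendsto
    | (m+1) => simpa using termn_tendsto m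
  have hTan := tendsto_tsum_of_dominated_convergence (𝓕 := atTop)
    (f := fun (k : ℕ) (n : ℕ) => ww k * tt k n)
    (g := fun n => if n = 0 then 3 * Real.sqrt 3 / Real.pi else 0)
    (bound := fun n : ℕ => (6*(n:ℝ)+6)*(1/2)^n)
    bound_summable hab (Filter.Eventually.of_forall (fun k n => bound_le k n))
  have hg : ∑' n : ℕ, (if n = 0 then 3 * Real.sqrt 3 / Real.pi else 0) =
      3 * Real.sqrt 3 / Real.pi := tsum_ite_eq 0 _
  have hconst : (fun k : ℕ => ∑' n : ℕ, ww k * tt k n) = fun _ : ℕ => SS 0 := by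
    funext k
    rw [tsum_mul_left]
    show ww k * SS k = SS 0
    exact wS k
  rw [hg, hconst] at hTan
  exact tendsto_nhds_unique tendsto_const_nhds hTan

theorem stmt_17 (k : ℕ) :
    Filter.Tendsto (fun N => ∑ n ∈ Finset.range N,
      (1/2 : ℝ)^n * (poch (1/2 + k) n * poch (1/3) n * poch (2/3) n) / (poch (1 + k) n * poch (1 + 2*k) n * poch 1 n) * (6*(n:ℝ)+6*(k:ℝ)+1))
      Filter.atTop (nhds (3 * Real.sqrt 3 / Real.pi * ((poch 1 k)^2 / (poch (1/3) k * poch (2/3) k)))) := by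
  have h := (hasSum_tt k).tendsto_sum_nat
  have hval : SS k = 3 * Real.sqrt 3 / Real.pi * ((poch 1 k)^2 / (poch (1/3) k * poch (2/3) k)) := by
    have hw := wS k
    rw [SS0_val] at hw
    have hwp := ww_pos k
    have P := poch_pos (by norm_num : (0:ℝ) < 1/3) k
    have Q := poch_pos (by norm_num : (0:ℝ) < 2/3) k
    have R := poch_pos (by norm_num : (0:ℝ) < 1) k
    have : SS k = (3 * Real.sqrt 3 / Real.pi) / ww k := by
      rw [eq_div_iff hwp.ne']
      linarith [hw, mul_comm (ww k) (SS k)]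
    rw [this]
    unfold ww
    rw [div_div_eq_mul_div, mul_div_assoc]
  rw [← hval]
  simp only [tt, bb] at h
  exact h
end
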